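/- arXiv:1408.6371 — 7 statements merged into one kernel-verified Lean document; each statement's English description precedes it below -/
import Mathlib

section
/- Fix lattice parameters with $0 < \beta \le 1 \le \gamma < \alpha$, and set $N = (\alpha^2+\gamma^2)/2 - \beta^2 > 0$, $P = \alpha^2 - \gamma^2 > 0$. For a unit vector $e = (e_1,e_2,e_3) \in \mathbb{R}^3$, define $f_1(e) = \beta^2 e_1^2 + \tfrac{\alpha^2+\gamma^2}{2}(e_2^2+e_3^2) + (\alpha^2-\gamma^2)e_2e_3$ and similarly $f_2,\ldots,f_6$ corresponding to the six orthorhombic variants. Then $f_1(e) \ge f_i(e)$ for all $i = 2,\ldots,6$ if and only if $e_2 e_3 \ge 0$ and $|e_1| \le \min\{|e_2|, |e_3|\}$. -/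
private lemma aux1 (N P x y z : ℝ) (hN : 0 < N) (hP : 0 < P)
    (h3 : 0 ≤ N * (y ^ 2 - x ^ 2) + P * z * (y - x))
    (h4 : 0 ≤ N * (y ^ 2 - x ^ 2) + P * z * (y + x)) : x ^ 2 ≤ y ^ 2 := by
  by_contra hlt
  push_neg at hlt
  have hd : 0 < x ^ 2 - y ^ 2 := by linarith
  have hB : 0 ≤ N * (y ^ 2 - x ^ 2) + P * (z * y) := by linarith
  have t1 : 0 ≤ (x ^ 2 - y ^ 2) * (N * (N * (y ^ 2 - x ^ 2) + P * (z * y))) :=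
    mul_nonneg hd.le (mul_nonneg hN.le hB)
  have t2 := mul_nonneg h3 h4
  have t3 : 0 ≤ (x ^ 2 - y ^ 2) * (P * z) ^ 2 := mul_nonneg hd.le (sq_nonneg _)
  have t4 : 0 < N ^ 2 * (x ^ 2 - y ^ 2) ^ 2 := mul_pos (pow_pos hN 2) (pow_pos hd 2)
  nlinarith [t1, t2, t3, t4]

private lemma aux2 (x y z : ℝ) (hyz : 0 ≤ y * z) (hx : x ^ 2 ≤ y ^ 2) :
    0 ≤ z * y + z * x := by
  nlinarith [mul_nonneg (sq_nonneg z) (sub_nonneg.2 hx), hyz, sq_nonneg (z * y + z * x),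
    sq_nonneg (z * y - z * x)]

set_option maxHeartbeats 1000000 in
/-- Characterization of maximal directions for the variant `U₁` of the
cubic-to-orthorhombic transformation: `|U₁ e|² ≥ |Uᵢ e|²` for all `i` iff
`e₂ e₃ ≥ 0` and `|e₁| ≤ min(|e₂|, |e₃|)`. -/
theorem stmt_6 (α β γ : ℝ) (hβ : 0 < β) (hβ1 : β ≤ 1) (hγ : 1 ≤ γ) (hγα : γ < α)
    (e₁ e₂ e₃ : ℝ) (hunit : e₁ ^ 2 + e₂ ^ 2 + e₃ ^ 2 = 1) :
    (let f₁ := β ^ 2 * e₁ ^ 2 + (α ^ 2 + γ ^ 2) / 2 * (e₂ ^ 2 + e₃ ^ 2) + (α ^ 2 - γ ^ 2) * e₂ * e₃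
     let f₂ := β ^ 2 * e₁ ^ 2 + (α ^ 2 + γ ^ 2) / 2 * (e₂ ^ 2 + e₃ ^ 2) - (α ^ 2 - γ ^ 2) * e₂ * e₃
     let f₃ := β ^ 2 * e₂ ^ 2 + (α ^ 2 + γ ^ 2) / 2 * (e₁ ^ 2 + e₃ ^ 2) + (α ^ 2 - γ ^ 2) * e₁ * e₃
     let f₄ := β ^ 2 * e₂ ^ 2 + (α ^ 2 + γ ^ 2) / 2 * (e₁ ^ 2 + e₃ ^ 2) - (α ^ 2 - γ ^ 2) * e₁ * e₃
     let f₅ := β ^ 2 * e₃ ^ 2 + (α ^ 2 + γ ^ 2) / 2 * (e₁ ^ 2 + e₂ ^ 2) + (α ^ 2 - γ ^ 2) * e₁ * e₂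
     let f₆ := β ^ 2 * e₃ ^ 2 + (α ^ 2 + γ ^ 2) / 2 * (e₁ ^ 2 + e₂ ^ 2) - (α ^ 2 - γ ^ 2) * e₁ * e₂
     f₂ ≤ f₁ ∧ f₃ ≤ f₁ ∧ f₄ ≤ f₁ ∧ f₅ ≤ f₁ ∧ f₆ ≤ f₁) ↔
    (0 ≤ e₂ * e₃ ∧ |e₁| ≤ min |e₂| |e₃|) := by
  have hγ2 : (1:ℝ) ≤ γ ^ 2 := by nlinarith
  have hP : 0 < α ^ 2 - γ ^ 2 := by nlinarith
  have hN : 0 < (α ^ 2 + γ ^ 2) / 2 - β ^ 2 := by nlinarith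
  rw [le_min_iff, ← sq_le_sq, ← sq_le_sq]
  constructor
  · rintro ⟨h2, h3, h4, h5, h6⟩
    have he23 : 0 ≤ e₂ * e₃ := by nlinarith [h2, hP]
    refine ⟨he23, ?_, ?_⟩
    · exact aux1 _ _ e₁ e₂ e₃ hN hP (by linarith) (by linarith)
    · exact aux1 _ _ e₁ e₃ e₂ hN hP (by linarith) (by linarith)
  · rintro ⟨h2, hy, hz⟩
    have a3 : 0 ≤ e₃ * e₂ + e₃ * (-e₁) := aux2 (-e₁) e₂ e₃ h2 (by nlinarith)
    have a4 : 0 ≤ e₃ * e₂ + e₃ * e₁ := aux2 e₁ e₂ e₃ h2 hy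
    have a5 : 0 ≤ e₂ * e₃ + e₂ * (-e₁) := aux2 (-e₁) e₃ e₂ (by linarith [mul_comm e₂ e₃]) (by nlinarith)
    have a6 : 0 ≤ e₂ * e₃ + e₂ * e₁ := aux2 e₁ e₃ e₂ (by linarith [mul_comm e₂ e₃]) hz
    have ny : 0 ≤ ((α ^ 2 + γ ^ 2) / 2 - β ^ 2) * (e₂ ^ 2 - e₁ ^ 2) := mul_nonneg hN.le (by linarith)
    have nz : 0 ≤ ((α ^ 2 + γ ^ 2) / 2 - β ^ 2) * (e₃ ^ 2 - e₁ ^ 2) := mul_nonneg hN.le (by linarith)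
    refine ⟨by linarith [mul_nonneg hP.le h2], ?_, ?_, ?_, ?_⟩
    · linarith [mul_nonneg hP.le a3, ny]
    · linarith [mul_nonneg hP.le a4, ny]
    · linarith [mul_nonneg hP.le a5, nz]
    · linarith [mul_nonneg hP.le a6, nz]
end

section
/- Fix lattice parameters with $0 < \beta \le 1 \le \gamma < \alpha$ and assume $2\alpha^2 + \beta^2 \ge 3$. If $e = (e_1,e_2,e_3)$ is a unit vector with $e_2 e_3 \ge 0$ and $|e_1| \le \min\{|e_2|,|e_3|\}$, then $\beta^2 e_1^2 + \tfrac{\alpha^2+\gamma^2}{2}(e_2^2+e_3^2) + (\alpha^2-\gamma^2)e_2 e_3 \ge 1$. -/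
/-- If `2α² + β² ≥ 3` and `e` is a unit vector with `e₂ e₃ ≥ 0` and
`|e₁| ≤ min(|e₂|, |e₃|)`, then `|U₁ e|² ≥ 1`. -/
theorem stmt_7 (α β γ : ℝ) (hβ : 0 < β) (hβ1 : β ≤ 1) (hγ : 1 ≤ γ) (hγα : γ < α)
    (hA2 : 3 ≤ 2 * α ^ 2 + β ^ 2)
    (e₁ e₂ e₃ : ℝ) (hunit : e₁ ^ 2 + e₂ ^ 2 + e₃ ^ 2 = 1)
    (hsign : 0 ≤ e₂ * e₃) (hmin : |e₁| ≤ min |e₂| |e₃|) :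
    1 ≤ β ^ 2 * e₁ ^ 2 + (α ^ 2 + γ ^ 2) / 2 * (e₂ ^ 2 + e₃ ^ 2)
        + (α ^ 2 - γ ^ 2) * e₂ * e₃ := by
  have h2 : e₁ ^ 2 ≤ e₂ ^ 2 := by
    have := (le_min_iff.mp hmin).1
    calc e₁ ^ 2 = |e₁| ^ 2 := (sq_abs e₁).symm
      _ ≤ |e₂| ^ 2 := pow_le_pow_left₀ (abs_nonneg _) this 2
      _ = e₂ ^ 2 := sq_abs e₂
  have h3 : e₁ ^ 2 ≤ e₃ ^ 2 := by
    have := (le_min_iff.mp hmin).2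
    calc e₁ ^ 2 = |e₁| ^ 2 := (sq_abs e₁).symm
      _ ≤ |e₃| ^ 2 := pow_le_pow_left₀ (abs_nonneg _) this 2
      _ = e₃ ^ 2 := sq_abs e₃
  have h23 : e₁ ^ 2 ≤ e₂ * e₃ := by
    nlinarith [sq_nonneg e₁, sq_nonneg (e₂ * e₃ - e₁ ^ 2), sq_nonneg (e₂ * e₃ + e₁ ^ 2)]
  have ht : 3 * e₁ ^ 2 ≤ 1 := by nlinarith
  have hge : (1:ℝ) ≤ γ ^ 2 := by nlinarith
  have hga : γ ^ 2 ≤ α ^ 2 := by nlinarith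
  rcases le_total (3 * γ ^ 2) (2 * β ^ 2 + α ^ 2) with h | h
  · nlinarith [sq_nonneg e₁, mul_nonneg (sub_nonneg.mpr hga) (sub_nonneg.mpr h23),
      mul_nonneg (sq_nonneg e₁) (sub_nonneg.mpr h)]
  · nlinarith [mul_nonneg (sub_nonneg.mpr hga) (sub_nonneg.mpr h23),
      mul_nonneg (sub_nonneg.mpr ht) (sub_nonneg.mpr h)]
end

section
/- Fix lattice parameters with $0 < \beta \le 1 \le \gamma < \alpha$, set $A = \alpha^2\gamma^2 - \beta^2(\alpha^2+\gamma^2)/2$ and $B = \beta^2(\alpha^2-\gamma^2)$, and assume $A > B > 0$. For a unit vector $e = (e_1, e_2, e_3)$, define $g_1(e) = \alpha^2\gamma^2 e_1^2 + \beta^2\tfrac{\alpha^2+\gamma^2}{2}(e_2^2+e_3^2) + \beta^2(\gamma^2-\alpha^2)e_2e_3$ and analogously $g_2,\ldots,g_6$ for the other variants. Then $g_1(e) > g_i(e)$ for all $i = 2,\ldots,6$ if and only if $e_2 e_3 < 0$ and $|e_1| > \max\{|e_2|, |e_3|\}$. -/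
lemma pair_lemma (A B x y z : ℝ) (hA : 0 < A) (hB : 0 < B) (hyz : y * z < 0)
    (h3 : 0 < A * (x ^ 2 - y ^ 2) + B * z * (x - y))
    (h4 : 0 < A * (x ^ 2 - y ^ 2) - B * z * (x + y))
    (hxy : |x| ≤ |y|) : A * (|x| + |y|) < B * |z| := by
  rcases lt_or_ge z 0 with hz | hz
  · have hy : 0 < y := by nlinarith
    rw [abs_of_pos hy, abs_of_neg hz] at *
    rcases le_or_gt 0 x with hx | hx
    · rw [abs_of_nonneg hx] at hxy ⊢
      nlinarith
    · rw [abs_of_neg hx] at hxy ⊢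
      nlinarith
  · have hz' : 0 < z := lt_of_le_of_ne hz (by rintro rfl; simp at hyz)
    have hy : y < 0 := by nlinarith
    rw [abs_of_neg hy, abs_of_pos hz'] at *
    rcases le_or_gt 0 x with hx | hx
    · rw [abs_of_nonneg hx] at hxy ⊢
      nlinarith
    · rw [abs_of_neg hx] at hxy ⊢
      nlinarith

lemma rev_lemma (A B x y z : ℝ) (hB : 0 < B) (hAB : B < A) (hyz : y * z < 0)
    (hyx : |y| < |x|) (hzx : |z| < |x|) :
    0 < A * (x ^ 2 - y ^ 2) + B * z * (x - y) ∧
    0 < A * (x ^ 2 - y ^ 2) - B * z * (x + y) := by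
  have hA : 0 < A := hB.trans hAB
  have eP : A * (x ^ 2 - y ^ 2) + B * z * (x - y) = (x - y) * (A * (x + y) + B * z) := by ring
  have eQ : A * (x ^ 2 - y ^ 2) - B * z * (x + y) = (x + y) * (A * (x - y) - B * z) := by ring
  rw [eP, eQ]
  rcases lt_or_ge z 0 with hz | hz
  · have hy : 0 < y := by nlinarith
    rw [abs_of_pos hy] at hyx
    rw [abs_of_neg hz] at hzx
    rcases le_or_gt 0 x with hx | hx
    · rw [abs_of_nonneg hx] at hyx hzx
      have hx' : 0 < x := by linarith
      refine ⟨mul_pos (by linarith) ?_, mul_pos (by linarith) ?_⟩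
      · nlinarith [mul_lt_mul_of_pos_left hzx hB, mul_pos hA hy,
          mul_pos (sub_pos.2 hAB) hx']
      · nlinarith [mul_pos hA (show 0 < x - y by linarith), mul_pos hB (show 0 < -z by linarith)]
    · rw [abs_of_neg hx] at hyx hzx
      refine ⟨mul_pos_of_neg_of_neg (by linarith) ?_, mul_pos_of_neg_of_neg (by linarith) ?_⟩
      · nlinarith [mul_pos hA (show 0 < -x - y by linarith), mul_pos hB (show 0 < -z by linarith)]
      · nlinarith [mul_lt_mul_of_pos_left (show -z < y - x by linarith) hA,
          mul_lt_mul_of_pos_right hAB (show 0 < -z by linarith)]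
  · have hz' : 0 < z := lt_of_le_of_ne hz (by rintro rfl; simp at hyz)
    have hy : y < 0 := by nlinarith
    rw [abs_of_neg hy] at hyx
    rw [abs_of_pos hz'] at hzx
    rcases le_or_gt 0 x with hx | hx
    · rw [abs_of_nonneg hx] at hyx hzx
      refine ⟨mul_pos (by linarith) ?_, mul_pos (by linarith) ?_⟩
      · nlinarith [mul_pos hA (show 0 < x + y by linarith), mul_pos hB hz']
      · nlinarith [mul_lt_mul_of_pos_left (show z < x - y by linarith) hA,
          mul_lt_mul_of_pos_right hAB hz']
    · rw [abs_of_neg hx] at hyx hzx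
      refine ⟨mul_pos_of_neg_of_neg (by linarith) ?_, mul_pos_of_neg_of_neg (by linarith) ?_⟩
      · nlinarith [mul_lt_mul_of_pos_left (show z < -x - y by linarith) hA,
          mul_lt_mul_of_pos_right hAB hz']
      · nlinarith [mul_pos hA (show 0 < y - x by linarith), mul_pos hB hz']

set_option maxHeartbeats 2000000 in
/-- Characterization of maximal directions for `U₁⁻¹` (via cofactors):
`|cof U₁ e|² > |cof Uᵢ e|²` for all `i ≠ 1` iff `e₂ e₃ < 0` and
`|e₁| > max(|e₂|, |e₃|)`. -/
theorem stmt_8 (α β γ : ℝ) (hβ : 0 < β) (hβ1 : β ≤ 1) (hγ : 1 ≤ γ) (hγα : γ < α)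
    (hB : 0 < β ^ 2 * (α ^ 2 - γ ^ 2))
    (hAB : β ^ 2 * (α ^ 2 - γ ^ 2) < α ^ 2 * γ ^ 2 - β ^ 2 * (α ^ 2 + γ ^ 2) / 2)
    (e₁ e₂ e₃ : ℝ) (hunit : e₁ ^ 2 + e₂ ^ 2 + e₃ ^ 2 = 1) :
    (let g₁ := α ^ 2 * γ ^ 2 * e₁ ^ 2 + β ^ 2 * ((α ^ 2 + γ ^ 2) / 2) * (e₂ ^ 2 + e₃ ^ 2)
                 + β ^ 2 * (γ ^ 2 - α ^ 2) * e₂ * e₃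
     let g₂ := α ^ 2 * γ ^ 2 * e₁ ^ 2 + β ^ 2 * ((α ^ 2 + γ ^ 2) / 2) * (e₂ ^ 2 + e₃ ^ 2)
                 - β ^ 2 * (γ ^ 2 - α ^ 2) * e₂ * e₃
     let g₃ := α ^ 2 * γ ^ 2 * e₂ ^ 2 + β ^ 2 * ((α ^ 2 + γ ^ 2) / 2) * (e₁ ^ 2 + e₃ ^ 2)
                 + β ^ 2 * (γ ^ 2 - α ^ 2) * e₁ * e₃
     let g₄ := α ^ 2 * γ ^ 2 * e₂ ^ 2 + β ^ 2 * ((α ^ 2 + γ ^ 2) / 2) * (e₁ ^ 2 + e₃ ^ 2)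
                 - β ^ 2 * (γ ^ 2 - α ^ 2) * e₁ * e₃
     let g₅ := α ^ 2 * γ ^ 2 * e₃ ^ 2 + β ^ 2 * ((α ^ 2 + γ ^ 2) / 2) * (e₁ ^ 2 + e₂ ^ 2)
                 + β ^ 2 * (γ ^ 2 - α ^ 2) * e₁ * e₂
     let g₆ := α ^ 2 * γ ^ 2 * e₃ ^ 2 + β ^ 2 * ((α ^ 2 + γ ^ 2) / 2) * (e₁ ^ 2 + e₂ ^ 2)
                 - β ^ 2 * (γ ^ 2 - α ^ 2) * e₁ * e₂
     g₂ < g₁ ∧ g₃ < g₁ ∧ g₄ < g₁ ∧ g₅ < g₁ ∧ g₆ < g₁) ↔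
    (e₂ * e₃ < 0 ∧ max |e₂| |e₃| < |e₁|) := by
  show ((α ^ 2 * γ ^ 2 * e₁ ^ 2 + β ^ 2 * ((α ^ 2 + γ ^ 2) / 2) * (e₂ ^ 2 + e₃ ^ 2) - β ^ 2 * (γ ^ 2 - α ^ 2) * e₂ * e₃) < (α ^ 2 * γ ^ 2 * e₁ ^ 2 + β ^ 2 * ((α ^ 2 + γ ^ 2) / 2) * (e₂ ^ 2 + e₃ ^ 2) + β ^ 2 * (γ ^ 2 - α ^ 2) * e₂ * e₃) ∧ (α ^ 2 * γ ^ 2 * e₂ ^ 2 + β ^ 2 * ((α ^ 2 + γ ^ 2) / 2) * (e₁ ^ 2 + e₃ ^ 2) + β ^ 2 * (γ ^ 2 - α ^ 2) * e₁ * e₃) < (α ^ 2 * γ ^ 2 * e₁ ^ 2 + β ^ 2 * ((α ^ 2 + γ ^ 2) / 2) * (e₂ ^ 2 + e₃ ^ 2) + β ^ 2 * (γ ^ 2 - α ^ 2) * e₂ * e₃) ∧ (α ^ 2 * γ ^ 2 * e₂ ^ 2 + β ^ 2 * ((α ^ 2 + γ ^ 2) / 2) * (e₁ ^ 2 + e₃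 ^ 2) - β ^ 2 * (γ ^ 2 - α ^ 2) * e₁ * e₃) < (α ^ 2 * γ ^ 2 * e₁ ^ 2 + β ^ 2 * ((α ^ 2 + γ ^ 2) / 2) * (e₂ ^ 2 + e₃ ^ 2) + β ^ 2 * (γ ^ 2 - α ^ 2) * e₂ * e₃) ∧ (α ^ 2 * γ ^ 2 * e₃ ^ 2 + β ^ 2 * ((α ^ 2 + γ ^ 2) / 2) * (e₁ ^ 2 + e₂ ^ 2) + β ^ 2 * (γ ^ 2 - α ^ 2) * e₁ * e₂) < (α ^ 2 * γ ^ 2 * e₁ ^ 2 + β ^ 2 * ((α ^ 2 + γ ^ 2) / 2) * (e₂ ^ 2 + e₃ ^ 2) + β ^ 2 * (γ ^ 2 - α ^ 2) * e₂ * e₃) ∧ (α ^ 2 * γ ^ 2 * e₃ ^ 2 + β ^ 2 * ((α ^ 2 + γ ^ 2) / 2) * (e₁ ^ 2 + e₂ ^ 2) - β ^ 2 * (γ ^ 2 - α ^ 2) * e₁ * e₂) < (α ^ 2 * γ ^ 2 * e₁ ^ 2 + β ^ 2 * ((α ^ 2 + γ ^ 2) / 2) * (e₂ ^ 2 + e₃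 ^ 2) + β ^ 2 * (γ ^ 2 - α ^ 2) * e₂ * e₃)) ↔ (e₂ * e₃ < 0 ∧ max |e₂| |e₃| < |e₁|)
  have hA : 0 < α ^ 2 * γ ^ 2 - β ^ 2 * (α ^ 2 + γ ^ 2) / 2 := hB.trans hAB
  constructor
  · rintro ⟨h2, h3, h4, h5, h6⟩
    have hBe : 0 < β ^ 2 * (α ^ 2 - γ ^ 2) * (-(e₂ * e₃)) := by linarith [h2]
    have hyz : e₂ * e₃ < 0 := by
      by_contra hc
      push_neg at hc
      nlinarith [mul_nonneg hB.le hc]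
    have hzy : e₃ * e₂ < 0 := by rw [mul_comm]; exact hyz
    have H3 : 0 < (α ^ 2 * γ ^ 2 - β ^ 2 * (α ^ 2 + γ ^ 2) / 2) * (e₁ ^ 2 - e₂ ^ 2)
        + β ^ 2 * (α ^ 2 - γ ^ 2) * e₃ * (e₁ - e₂) := by linarith [h3]
    have H4 : 0 < (α ^ 2 * γ ^ 2 - β ^ 2 * (α ^ 2 + γ ^ 2) / 2) * (e₁ ^ 2 - e₂ ^ 2)
        - β ^ 2 * (α ^ 2 - γ ^ 2) * e₃ * (e₁ + e₂) := by linarith [h4]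
    have H5 : 0 < (α ^ 2 * γ ^ 2 - β ^ 2 * (α ^ 2 + γ ^ 2) / 2) * (e₁ ^ 2 - e₃ ^ 2)
        + β ^ 2 * (α ^ 2 - γ ^ 2) * e₂ * (e₁ - e₃) := by linarith [h5]
    have H6 : 0 < (α ^ 2 * γ ^ 2 - β ^ 2 * (α ^ 2 + γ ^ 2) / 2) * (e₁ ^ 2 - e₃ ^ 2)
        - β ^ 2 * (α ^ 2 - γ ^ 2) * e₂ * (e₁ + e₃) := by linarith [h6]
    refine ⟨hyz, ?_⟩
    rcases le_or_gt |e₁| |e₂| with h | h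
    · exfalso
      have c1 := pair_lemma _ _ e₁ e₂ e₃ hA hB hyz H3 H4 h
      have h23 : |e₂| < |e₃| := by
        nlinarith [abs_nonneg e₁, abs_nonneg e₂, abs_nonneg e₃]
      have c2 := pair_lemma _ _ e₁ e₃ e₂ hA hB hzy H5 H6 (h.trans h23.le)
      nlinarith [abs_nonneg e₁, abs_nonneg e₂, abs_nonneg e₃]
    · rcases le_or_gt |e₁| |e₃| with h' | h'
      · exfalso
        have c2 := pair_lemma _ _ e₁ e₃ e₂ hA hB hzy H5 H6 h'
        nlinarith [abs_nonneg e₁, abs_nonneg e₂, abs_nonneg e₃]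
      · exact max_lt h h'
  · rintro ⟨hyz, hmax⟩
    rw [max_lt_iff] at hmax
    obtain ⟨h2x, h3x⟩ := hmax
    have hzy : e₃ * e₂ < 0 := by rw [mul_comm]; exact hyz
    have R1 := rev_lemma _ _ e₁ e₂ e₃ hB hAB hyz h2x h3x
    have R2 := rev_lemma _ _ e₁ e₃ e₂ hB hAB hzy h3x h2x
    have hBe : 0 < β ^ 2 * (α ^ 2 - γ ^ 2) * (-(e₂ * e₃)) :=
      mul_pos hB (by linarith)
    refine ⟨by linarith [hBe], by linarith [R1.1], by linarith [R1.2],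
      by linarith [R2.1], by linarith [R2.2]⟩
end

section
/- Fix lattice parameters with $0 < \beta \le 1 \le \gamma < \alpha$ and assume $\alpha^2\gamma^2 + \alpha^2\beta^2 + \beta^2\gamma^2 \ge 3$. If $e = (e_1,e_2,e_3)$ is a unit vector with $e_2 e_3 < 0$ and $|e_1| > \max\{|e_2|,|e_3|\}$, then $\alpha^2\gamma^2 e_1^2 + \beta^2\tfrac{\alpha^2+\gamma^2}{2}(e_2^2+e_3^2) + \beta^2(\gamma^2-\alpha^2)e_2 e_3 > 1$. -/
/-- If `α²γ² + α²β² + β²γ² ≥ 3` and `e` is a unit vector with `e₂ e₃ < 0` and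
`|e₁| > max(|e₂|, |e₃|)`, then `|cof U₁ e|² > 1`. -/
theorem stmt_9 (α β γ : ℝ) (hβ : 0 < β) (hβ1 : β ≤ 1) (hγ : 1 ≤ γ) (hγα : γ < α)
    (hA3 : 3 ≤ α ^ 2 * γ ^ 2 + α ^ 2 * β ^ 2 + β ^ 2 * γ ^ 2)
    (e₁ e₂ e₃ : ℝ) (hunit : e₁ ^ 2 + e₂ ^ 2 + e₃ ^ 2 = 1)
    (hsign : e₂ * e₃ < 0) (hmax : max |e₂| |e₃| < |e₁|) :
    1 < α ^ 2 * γ ^ 2 * e₁ ^ 2 + β ^ 2 * ((α ^ 2 + γ ^ 2) / 2) * (e₂ ^ 2 + e₃ ^ 2)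
        + β ^ 2 * (γ ^ 2 - α ^ 2) * e₂ * e₃ := by
  have h2 : |e₂| < |e₁| := lt_of_le_of_lt (le_max_left _ _) hmax
  have h3 : |e₃| < |e₁| := lt_of_le_of_lt (le_max_right _ _) hmax
  have h2' : e₂ ^ 2 < e₁ ^ 2 := by
    rw [← sq_abs e₂, ← sq_abs e₁]; exact pow_lt_pow_left₀ h2 (abs_nonneg _) two_ne_zero
  have h3' : e₃ ^ 2 < e₁ ^ 2 := by
    rw [← sq_abs e₃, ← sq_abs e₁]; exact pow_lt_pow_left₀ h3 (abs_nonneg _) two_ne_zero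
  have he1 : (1 : ℝ) / 3 ≤ e₁ ^ 2 := by nlinarith
  have hα : 1 ≤ α := le_of_lt (lt_of_le_of_lt hγ hγα)
  -- a ≥ (b+c)/2 where a = α²γ², b = β²α², c = β²γ²
  have hkey : β ^ 2 * (α ^ 2 + γ ^ 2) / 2 ≤ α ^ 2 * γ ^ 2 := by
    have hb2 : β ^ 2 ≤ 1 := by nlinarith
    have hg2 : 1 ≤ γ ^ 2 := by nlinarith
    have ha2 : 1 ≤ α ^ 2 := by nlinarith
    nlinarith [mul_nonneg (sq_nonneg α) (by linarith : (0:ℝ) ≤ γ ^ 2 - 1),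
      mul_nonneg (sq_nonneg γ) (by linarith : (0:ℝ) ≤ α ^ 2 - 1),
      mul_nonneg (by linarith : (0:ℝ) ≤ 1 - β ^ 2) (by positivity : (0:ℝ) ≤ α ^ 2 + γ ^ 2)]
  have hbc : β ^ 2 * γ ^ 2 < β ^ 2 * α ^ 2 := by
    have : γ ^ 2 < α ^ 2 := by nlinarith
    exact mul_lt_mul_of_pos_left this (by positivity)
  nlinarith [mul_nonneg (by linarith : (0:ℝ) ≤ α ^ 2 * γ ^ 2 - β ^ 2 * (α ^ 2 + γ ^ 2) / 2)
      (by linarith : (0:ℝ) ≤ e₁ ^ 2 - 1/3),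
    mul_pos (by linarith : (0:ℝ) < β ^ 2 * α ^ 2 - β ^ 2 * γ ^ 2)
      (by linarith : (0:ℝ) < -(e₂ * e₃))]
end

section
/- Fix $0 < \beta \le 1 \le \gamma < \alpha$ with $A := \alpha^2\gamma^2 - \beta^2(\alpha^2+\gamma^2)/2 > B := \beta^2(\alpha^2-\gamma^2) > 0$. A unit vector $n = (n_1,n_2,n_3)$ admits a unit vector $e$ with $e_2e_3 \ge 0$, $|e_1| \le \min\{|e_2|,|e_3|\}$, and $e \cdot n = 0$, if and only if $n_2 n_3 \le 0$ or $|n_1| \ge |n_2| + |n_3|$. -/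
private lemma abs_add_of_mul_nonneg' {x y : ℝ} (h : 0 ≤ x * y) : |x + y| = |x| + |y| := by
  rcases le_or_gt 0 x with hx | hx <;> rcases le_or_gt 0 y with hy | hy
  · rw [abs_of_nonneg hx, abs_of_nonneg hy, abs_of_nonneg (by linarith)]
  · have hx0 : x = 0 := by nlinarith
    subst hx0; simp
  · have hy0 : y = 0 := by nlinarith
    subst hy0; simp
  · rw [abs_of_nonpos hx.le, abs_of_nonpos hy.le, abs_of_nonpos (by linarith)]; ring

/-- Characterization of the set `𝒩₁` of normals to planes containing a maximal
direction for `U₁`: a unit vector `n` is orthogonal to some unit vector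
`e ∈ ℳ₁ = {e : e₂e₃ ≥ 0, |e₁| ≤ min(|e₂|,|e₃|)}` iff `n₂ n₃ ≤ 0` or
`|n₁| ≥ |n₂| + |n₃|`. -/
theorem stmt_10 (α β γ : ℝ) (hβ : 0 < β) (hβ1 : β ≤ 1) (hγ : 1 ≤ γ) (hγα : γ < α)
    (hB : 0 < β ^ 2 * (α ^ 2 - γ ^ 2))
    (hAB : β ^ 2 * (α ^ 2 - γ ^ 2) < α ^ 2 * γ ^ 2 - β ^ 2 * (α ^ 2 + γ ^ 2) / 2)
    (n₁ n₂ n₃ : ℝ) (hunit : n₁ ^ 2 + n₂ ^ 2 + n₃ ^ 2 = 1) :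
    (∃ e₁ e₂ e₃ : ℝ, e₁ ^ 2 + e₂ ^ 2 + e₃ ^ 2 = 1 ∧ 0 ≤ e₂ * e₃ ∧
      |e₁| ≤ min |e₂| |e₃| ∧ e₁ * n₁ + e₂ * n₂ + e₃ * n₃ = 0) ↔
    (n₂ * n₃ ≤ 0 ∨ |n₂| + |n₃| ≤ |n₁|) := by
  constructor
  · rintro ⟨e₁, e₂, e₃, hu, he, hmin, hdot⟩
    by_contra hcon
    push_neg at hcon
    obtain ⟨h23, h1⟩ := hcon
    have hm2 : min |e₂| |e₃| ≤ |e₂| := min_le_left _ _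
    have hm3 : min |e₂| |e₃| ≤ |e₃| := min_le_right _ _
    have hpos : 0 < min |e₂| |e₃| := by
      rcases lt_or_ge 0 (min |e₂| |e₃|) with h | h
      · exact h
      have he1 : e₁ = 0 := abs_eq_zero.mp (le_antisymm (hmin.trans h) (abs_nonneg _))
      rcases min_le_iff.mp h with h2 | h2
      · have he2 : e₂ = 0 := abs_eq_zero.mp (le_antisymm h2 (abs_nonneg _))
        subst he2; subst he1
        have h3 : e₃ ^ 2 = 1 := by linear_combination hu
        have hd : e₃ * n₃ = 0 := by linear_combination hdot
        have hn3 : n₃ = 0 := by linear_combination (-n₃) * h3 + e₃ * hd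
        rw [hn3, mul_zero] at h23
        exact absurd h23 (lt_irrefl 0)
      · have he3 : e₃ = 0 := abs_eq_zero.mp (le_antisymm h2 (abs_nonneg _))
        subst he3; subst he1
        have h3 : e₂ ^ 2 = 1 := by linear_combination hu
        have hd : e₂ * n₂ = 0 := by linear_combination hdot
        have hn2 : n₂ = 0 := by linear_combination (-n₂) * h3 + e₂ * hd
        rw [hn2, zero_mul] at h23
        exact absurd h23 (lt_irrefl 0)
    have hprod : 0 ≤ (e₂ * n₂) * (e₃ * n₃) := by
      calc (0:ℝ) ≤ (e₂ * e₃) * (n₂ * n₃) := mul_nonneg he h23.le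
        _ = (e₂ * n₂) * (e₃ * n₃) := by ring
    have hsum : |e₂ * n₂ + e₃ * n₃| = |e₂| * |n₂| + |e₃| * |n₃| := by
      rw [abs_add_of_mul_nonneg' hprod, abs_mul, abs_mul]
    have hkey : |e₂| * |n₂| + |e₃| * |n₃| ≤ |e₁| * |n₁| := by
      rw [← hsum, ← abs_mul]
      have h : e₂ * n₂ + e₃ * n₃ = -(e₁ * n₁) := by linarith
      rw [h, abs_neg]
    nlinarith [mul_pos hpos (by linarith : (0:ℝ) < |n₂| + |n₃| - |n₁|),
      mul_nonneg (sub_nonneg.mpr hm2) (abs_nonneg n₂),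
      mul_nonneg (sub_nonneg.mpr hm3) (abs_nonneg n₃),
      mul_nonneg (sub_nonneg.mpr hmin) (abs_nonneg n₁)]
  · rintro (h23 | h1)
    · rcases eq_or_lt_of_le (by positivity : (0:ℝ) ≤ n₂ ^ 2 + n₃ ^ 2) with h0 | h0
      · have hn2sq : n₂ ^ 2 = 0 := by linarith [sq_nonneg n₂, sq_nonneg n₃]
        have hn2 : n₂ = 0 := sq_eq_zero_iff.mp hn2sq
        exact ⟨0, 1, 0, by norm_num, by norm_num, by norm_num, by rw [hn2]; ring⟩
      · set s := Real.sqrt (n₂ ^ 2 + n₃ ^ 2) with hs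
        have hs2 : s ^ 2 = n₂ ^ 2 + n₃ ^ 2 := Real.sq_sqrt (by positivity)
        have hspos : 0 < s := Real.sqrt_pos.mpr h0
        refine ⟨0, n₃ / s, -n₂ / s, ?_, ?_, ?_, ?_⟩
        · field_simp
          linarith [hs2]
        · have h : n₃ / s * (-n₂ / s) = -(n₂ * n₃) / s ^ 2 := by ring
          rw [h]
          apply div_nonneg (by linarith) (by positivity)
        · simp [le_min_iff, abs_nonneg]
        · field_simp
          ring
    · have hn1 : n₁ ≠ 0 := by
        intro h
        rw [h] at h1 hunit
        simp only [abs_zero] at h1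
        have h2 : |n₂| = 0 := le_antisymm (by linarith [abs_nonneg n₃]) (abs_nonneg _)
        have h3 : |n₃| = 0 := le_antisymm (by linarith [abs_nonneg n₂]) (abs_nonneg _)
        have h2' : n₂ = 0 := abs_eq_zero.mp h2
        have h3' : n₃ = 0 := abs_eq_zero.mp h3
        rw [h2', h3'] at hunit
        norm_num at hunit
      set t := (n₂ + n₃) / n₁ with ht
      set r := Real.sqrt (t ^ 2 + 2) with hr
      have hr2 : r ^ 2 = t ^ 2 + 2 := Real.sq_sqrt (by positivity)
      have hrpos : 0 < r := Real.sqrt_pos.mpr (by positivity)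
      have htle : |t| ≤ 1 := by
        rw [ht, abs_div]
        rw [div_le_one (by positivity : (0:ℝ) < |n₁|)]
        calc |n₂ + n₃| ≤ |n₂| + |n₃| := abs_add_le _ _
          _ ≤ |n₁| := h1
      refine ⟨-t / r, 1 / r, 1 / r, ?_, ?_, ?_, ?_⟩
      · field_simp
        linarith [hr2]
      · positivity
      · rw [min_self, abs_div, abs_neg, abs_of_pos hrpos,
          abs_of_pos (by positivity : (0:ℝ) < 1 / r)]
        rw [div_le_div_iff₀ hrpos hrpos]
        nlinarith [htle, hrpos]
      · have htn : t * n₁ = n₂ + n₃ := by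
          rw [ht]; field_simp
        have hzero : -(t * n₁) + (n₂ + n₃) = 0 := by rw [htn]; ring
        calc -t / r * n₁ + 1 / r * n₂ + 1 / r * n₃
            = (-(t * n₁) + (n₂ + n₃)) / r := by ring
          _ = 0 := by rw [hzero, zero_div]
end

section
/- Fix $0 < \beta \le 1 \le \gamma < \alpha$. If a unit vector $n = (n_1,n_2,n_3)$ satisfies $n_2 n_3 > 0$ and $|n_1| < |n_2| + |n_3|$, then the vector $m = U_1^2 n$ also satisfies $m_2 m_3 > 0$ and $|m_1| < |m_2| + |m_3|$ (after normalization), where $U_1$ is the orthorhombic variant with $U_1^2 n = (\beta^2 n_1,\ \tfrac{\alpha^2+\gamma^2}{2}n_2 + \tfrac{\alpha^2-\gamma^2}{2}n_3,\ \tfrac{\alpha^2-\gamma^2}{2}n_2 + \tfrac{\alpha^2+\gamma^2}{2}n_3)$. -/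
set_option maxHeartbeats 1600000 in
/-- The property `n₂n₃ > 0 ∧ |n₁| < |n₂| + |n₃|` (of not lying in `𝒩₁`) is
preserved under the linear map `U₁²`. -/
theorem stmt_11 (α β γ : ℝ) (hβ : 0 < β) (hβ1 : β ≤ 1) (hγ : 1 ≤ γ) (hγα : γ < α)
    (n₁ n₂ n₃ : ℝ) (hunit : n₁ ^ 2 + n₂ ^ 2 + n₃ ^ 2 = 1)
    (hsign : 0 < n₂ * n₃) (hlt : |n₁| < |n₂| + |n₃|) :
    (let m₁ := β ^ 2 * n₁
     let m₂ := (α ^ 2 + γ ^ 2) / 2 * n₂ + (α ^ 2 - γ ^ 2) / 2 * n₃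
     let m₃ := (α ^ 2 - γ ^ 2) / 2 * n₂ + (α ^ 2 + γ ^ 2) / 2 * n₃
     0 < m₂ * m₃ ∧ |m₁| < |m₂| + |m₃|) := by
  have hγ0 : (0:ℝ) < γ := lt_of_lt_of_le one_pos hγ
  have hα0 : (0:ℝ) < α := lt_trans hγ0 hγα
  have hγ2 : γ ^ 2 < α ^ 2 := by nlinarith
  have hα2 : 1 ≤ α ^ 2 := by nlinarith
  have hβ2 : β ^ 2 ≤ 1 := by nlinarith
  have hβ2' : (0:ℝ) ≤ β ^ 2 := by positivity
  have key : ((α ^ 2 + γ ^ 2) / 2 * n₂ + (α ^ 2 - γ ^ 2) / 2 * n₃) *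
      ((α ^ 2 - γ ^ 2) / 2 * n₂ + (α ^ 2 + γ ^ 2) / 2 * n₃) =
      ((α ^ 2 * α ^ 2 - γ ^ 2 * γ ^ 2) * (n₂ - n₃) ^ 2
        + 4 * (α ^ 2 * α ^ 2) * (n₂ * n₃)) / 4 := by ring
  have hγ4 : γ ^ 2 * γ ^ 2 < α ^ 2 * α ^ 2 := by nlinarith
  refine ⟨?_, ?_⟩
  · rw [key]
    have h1 : 0 ≤ (α ^ 2 * α ^ 2 - γ ^ 2 * γ ^ 2) * (n₂ - n₃) ^ 2 :=
      mul_nonneg (by linarith) (sq_nonneg _)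
    have h2 : 0 < 4 * (α ^ 2 * α ^ 2) * (n₂ * n₃) := by positivity
    linarith
  · have h1 : |β ^ 2 * n₁| = β ^ 2 * |n₁| := by
      rw [abs_mul, abs_of_nonneg hβ2']
    have h2 : β ^ 2 * |n₁| ≤ |n₁| :=
      le_trans (mul_le_mul_of_nonneg_right hβ2 (abs_nonneg n₁)) (by rw [one_mul])
    rcases mul_pos_iff.mp hsign with ⟨h2p, h3p⟩ | ⟨h2n, h3n⟩
    · have hm2 : (0:ℝ) < (α ^ 2 + γ ^ 2) / 2 * n₂ + (α ^ 2 - γ ^ 2) / 2 * n₃ := by nlinarith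
      have hm3 : (0:ℝ) < (α ^ 2 - γ ^ 2) / 2 * n₂ + (α ^ 2 + γ ^ 2) / 2 * n₃ := by nlinarith
      rw [abs_of_pos h2p, abs_of_pos h3p] at hlt
      rw [h1, abs_of_pos hm2, abs_of_pos hm3]
      have hsum : (α ^ 2 + γ ^ 2) / 2 * n₂ + (α ^ 2 - γ ^ 2) / 2 * n₃
          + ((α ^ 2 - γ ^ 2) / 2 * n₂ + (α ^ 2 + γ ^ 2) / 2 * n₃) = α ^ 2 * (n₂ + n₃) := by
        ring
      have h3 : n₂ + n₃ ≤ α ^ 2 * (n₂ + n₃) := by nlinarith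
      linarith
    · have hm2 : (α ^ 2 + γ ^ 2) / 2 * n₂ + (α ^ 2 - γ ^ 2) / 2 * n₃ < 0 := by nlinarith
      have hm3 : (α ^ 2 - γ ^ 2) / 2 * n₂ + (α ^ 2 + γ ^ 2) / 2 * n₃ < 0 := by nlinarith
      rw [abs_of_neg h2n, abs_of_neg h3n] at hlt
      rw [h1, abs_of_neg hm2, abs_of_neg hm3]
      have hsum : -((α ^ 2 + γ ^ 2) / 2 * n₂ + (α ^ 2 - γ ^ 2) / 2 * n₃)
          + -((α ^ 2 - γ ^ 2) / 2 * n₂ + (α ^ 2 + γ ^ 2) / 2 * n₃) = α ^ 2 * (-n₂ + -n₃) := by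
        ring
      have h3 : -n₂ + -n₃ ≤ α ^ 2 * (-n₂ + -n₃) := by nlinarith
      linarith
end

section
/- Let $f = U_1^2 e / |U_1^2 e|$ for a unit vector $e$, where $U_1^2 e = (\beta^2 e_1,\ \tfrac{\alpha^2+\gamma^2}{2}e_2 + \tfrac{\alpha^2-\gamma^2}{2}e_3,\ \tfrac{\alpha^2-\gamma^2}{2}e_2 + \tfrac{\alpha^2+\gamma^2}{2}e_3)$ with $0 < \gamma < \alpha$. If $f_2 f_3 < 0$ then $e_2 e_3 < 0$; in particular, $e$ does not satisfy $e_2 e_3 \ge 0$. -/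
/-- If `f = U₁² e / |U₁² e|` satisfies `f₂ f₃ < 0`, then `e₂ e₃ < 0`; in
particular `e` is not a maximal direction for `U₁` (which requires `e₂e₃ ≥ 0`).
Normalization is immaterial for the sign condition. -/
theorem stmt_12 (α γ : ℝ) (hγ : 0 < γ) (hγα : γ < α)
    (e₁ e₂ e₃ : ℝ) (hunit : e₁ ^ 2 + e₂ ^ 2 + e₃ ^ 2 = 1)
    (hf : ((α ^ 2 + γ ^ 2) / 2 * e₂ + (α ^ 2 - γ ^ 2) / 2 * e₃) *
          ((α ^ 2 - γ ^ 2) / 2 * e₂ + (α ^ 2 + γ ^ 2) / 2 * e₃) < 0) :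
    e₂ * e₃ < 0 ∧ ¬ (0 ≤ e₂ * e₃) := by
  have hα4 : γ^4 < α^4 := by exact pow_lt_pow_left₀ hγα hγ.le (by norm_num)
  have h : e₂ * e₃ < 0 := by
    by_contra hc
    push_neg at hc
    nlinarith [mul_nonneg (le_of_lt (by nlinarith : (0:ℝ) < α^4 - γ^4)) (add_nonneg (sq_nonneg e₂) (sq_nonneg e₃)),
      mul_nonneg (le_of_lt (by positivity : (0:ℝ) < α^4 + γ^4)) hc]
  exact ⟨h, not_le.mpr h⟩
end
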